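/- arXiv:quant-ph/0401060 — 4 statements merged into one kernel-verified Lean document; each statement's English description precedes it below -/
import Mathlib

section
/- Let M be a positive integer, let λ > 0 and ε ∈ (0,1) satisfy λ·log₂(1/ε − 1) > 2, and assume ⌊εM⌋ ≥ 1. Then there exist N subsets 𝓜₁, …, 𝓜_N of {1,…,M}, each of cardinality exactly ⌊εM⌋, with N ≥ 2^{⌊εM⌋}/M, such that for all i ≠ j the intersection satisfies |𝓜_i ∩ 𝓜_j| ≤ λ·⌊εM⌋. -/
lemma ad_two_pow_le_central (k : ℕ) : 2 ^ k ≤ (2 * k).choose k := by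
  induction k with
  | zero => simp
  | succ n ih =>
    have h1 : 2 * (n + 1) = (2 * n + 1) + 1 := by ring
    rw [h1, Nat.choose_succ_succ]
    have h2 : (2 * n).choose n ≤ (2 * n + 1).choose n :=
      Nat.choose_le_choose n (by omega)
    have h3 : (2 * n).choose n ≤ (2 * n + 1).choose (n + 1) := by
      rw [Nat.choose_succ_succ]; omega
    calc 2 ^ (n + 1) = 2 ^ n + 2 ^ n := by ring
      _ ≤ _ := Nat.add_le_add (le_trans ih h2) (le_trans ih h3)

lemma ad_choose_mono_below (M : ℕ) : ∀ m, 2 * m ≤ M → ∀ j ≤ m, M.choose j ≤ M.choose m := by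
  intro m
  induction m with
  | zero => intro _ j hj; interval_cases j; rfl
  | succ n ih =>
    intro hm j hj
    rcases Nat.lt_or_ge j (n + 1) with h | h
    · refine (ih (by omega) j (by omega)).trans (Nat.choose_le_succ_of_lt_half_left ?_)
      omega
    · have : j = n + 1 := by omega
      simp [this]

lemma ad_choose_ratio (M k : ℕ) (hkM : k ≤ M) :
    ∀ l ≤ k, M.choose (k - l) * (M - k) ^ l ≤ M.choose k * k ^ l := by
  intro l
  induction l with
  | zero => simp
  | succ n ih =>
    intro h
    have hn : n ≤ k := by omega
    have key : M.choose (k - (n + 1)) * (M - k) ≤ M.choose (k - n) * k := by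
      have h1 : k - n = (k - (n + 1)) + 1 := by omega
      have h2 := Nat.choose_succ_right_eq M (k - (n + 1))
      calc M.choose (k - (n + 1)) * (M - k)
          ≤ M.choose (k - (n + 1)) * (M - (k - (n + 1))) := by
            apply Nat.mul_le_mul_left; omega
        _ = M.choose (k - (n + 1) + 1) * (k - (n + 1) + 1) := h2.symm
        _ = M.choose (k - n) * (k - (n + 1) + 1) := by rw [← h1]
        _ ≤ M.choose (k - n) * k := by apply Nat.mul_le_mul_left; omega
    calc M.choose (k - (n + 1)) * (M - k) ^ (n + 1)
        = (M.choose (k - (n + 1)) * (M - k)) * (M - k) ^ n := by ring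
      _ ≤ (M.choose (k - n) * k) * (M - k) ^ n := Nat.mul_le_mul_right _ key
      _ = (M.choose (k - n) * (M - k) ^ n) * k := by ring
      _ ≤ (M.choose k * k ^ n) * k := Nat.mul_le_mul_right _ (ih hn)
      _ = M.choose k * k ^ (n + 1) := by ring

lemma ad_enum {α : Type*} [DecidableEq α] (s : Finset α) :
    ∃ f : Fin s.card → α, Function.Injective f ∧ ∀ i, f i ∈ s := by
  refine ⟨fun i => s.toList.get (i.cast s.length_toList.symm), ?_, ?_⟩
  · intro a b h
    have := (List.Nodup.get_inj_iff s.nodup_toList).mp h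
    simpa [Fin.ext_iff] using this
  · intro i
    apply Finset.mem_toList.mp
    exact s.toList.get_mem _

set_option maxHeartbeats 1000000 in
/-- **Ahlswede–Dueck construction.**
Let `M` be a positive integer, `λ > 0` and `ε ∈ (0,1)` with `λ·log₂(1/ε − 1) > 2`,
and `⌊εM⌋ ≥ 1`. Then there exist `N ≥ 2^⌊εM⌋/M` subsets of `{1,…,M}`, each of
cardinality `⌊εM⌋`, any two distinct ones intersecting in at most `λ·⌊εM⌋` elements. -/
theorem ahlswede_dueck_construction
    (M : ℕ) (hM : 0 < M) (lam eps : ℝ)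
    (hlam : 0 < lam) (heps0 : 0 < eps) (heps1 : eps < 1)
    (hcond : lam * Real.logb 2 (1 / eps - 1) > 2)
    (hfloor : 1 ≤ ⌊eps * M⌋₊) :
    ∃ (N : ℕ) (A : Fin N → Finset (Fin M)),
      (N : ℝ) ≥ 2 ^ ⌊eps * M⌋₊ / M ∧
      (∀ i, (A i).card = ⌊eps * M⌋₊) ∧
      (∀ i j, i ≠ j → ((A i ∩ A j).card : ℝ) ≤ lam * ⌊eps * M⌋₊) := by
  classical
  set k : ℕ := ⌊eps * M⌋₊ with hk
  -- basic real facts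
  have hX0 : (0:ℝ) < 1 / eps - 1 := by
    have : (1:ℝ) < 1 / eps := one_lt_one_div heps0 heps1
    linarith
  have hXlog : 2 / lam < Real.logb 2 (1 / eps - 1) := by
    rw [div_lt_iff₀ hlam, mul_comm]; exact hcond
  have hX : (2:ℝ) ^ ((2:ℝ) / lam) < 1 / eps - 1 := by
    have := (Real.lt_logb_iff_rpow_lt one_lt_two hX0).mp hXlog
    exact this
  have hXgt1 : (1:ℝ) < 1 / eps - 1 := by
    have h1 : (1:ℝ) = (2:ℝ) ^ (0:ℝ) := by simp
    have h2 : (2:ℝ) ^ (0:ℝ) < (2:ℝ) ^ ((2:ℝ)/lam) := by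
      apply Real.rpow_lt_rpow_left_iff (x := 2) one_lt_two |>.mpr
      positivity
    linarith
  have hMpos : (0:ℝ) < M := by exact_mod_cast hM
  have heps_half : 2 * eps < 1 := by
    have h2 : (2:ℝ) < 1 / eps := by linarith
    have := (lt_div_iff₀ heps0).mp h2
    linarith
  have hkle : (k : ℝ) ≤ eps * M := Nat.floor_le (by positivity)
  have h2kM : 2 * k < M := by
    have : (2 * k : ℝ) < M := by
      push_cast
      nlinarith [hkle, heps_half, hMpos]
    exact_mod_cast this
  have hkM : k ≤ M := by omega
  have hk1 : 1 ≤ k := hfloor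
  have hkMreal : (k : ℝ) + 1 ≤ M := by
    have : k + 1 ≤ M := by omega
    exact_mod_cast this
  by_cases hlam1 : 1 ≤ lam
  · -- trivial case: take all k-subsets
    set F : Finset (Finset (Fin M)) := Finset.powersetCard k Finset.univ with hF
    have hFcard : F.card = M.choose k := by
      rw [hF, Finset.card_powersetCard, Finset.card_univ, Fintype.card_fin]
    have hchoose : 2 ^ k ≤ F.card := by
      rw [hFcard]
      exact (ad_two_pow_le_central k).trans (Nat.choose_le_choose k (by omega))
    obtain ⟨f, hfinj, hfmem⟩ := ad_enum F
    refine ⟨F.card, f, ?_, ?_, ?_⟩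
    · have h1 : (2:ℝ) ^ k ≤ F.card := by exact_mod_cast hchoose
      have h2 : (2:ℝ) ^ k / M ≤ (2:ℝ) ^ k := by
        apply div_le_self (by positivity)
        exact_mod_cast hM
      linarith
    · intro i
      have hmem := hfmem i
      rw [hF, Finset.mem_powersetCard] at hmem
      exact hmem.2
    · intro i j _
      have hmem := hfmem i
      rw [hF, Finset.mem_powersetCard] at hmem
      have h1 : (f i ∩ f j).card ≤ k :=
        (Finset.card_le_card Finset.inter_subset_left).trans (le_of_eq hmem.2)
      have h2 : ((f i ∩ f j).card : ℝ) ≤ k := by exact_mod_cast h1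
      nlinarith [Nat.cast_nonneg (α := ℝ) k]
  · -- main case: lam < 1
    push_neg at hlam1
    set lf : ℕ := ⌊lam * (k:ℝ)⌋₊ with hlf
    set l : ℕ := lf + 1 with hl
    have hkpos : (0:ℝ) < k := by exact_mod_cast (show 0 < k by omega)
    have hlamk : lam * (k:ℝ) < l := by
      have h := Nat.lt_floor_add_one (lam * (k:ℝ))
      rw [hl]; push_cast; exact_mod_cast h
    have hlk : l ≤ k := by
      have h1 : lam * (k:ℝ) < (k:ℝ) := by nlinarith
      have h2 : (lf:ℝ) ≤ lam * k := Nat.floor_le (by positivity)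
      have h3 : (lf:ℝ) < k := lt_of_le_of_lt h2 h1
      have h4 : lf < k := by exact_mod_cast h3
      omega
    set F : Finset (Finset (Fin M)) := Finset.powersetCard k Finset.univ with hF
    have hFcard : F.card = M.choose k := by
      rw [hF, Finset.card_powersetCard, Finset.card_univ, Fintype.card_fin]
    have hmemF : ∀ B ∈ F, B.card = k := by
      intro B hB; rw [hF, Finset.mem_powersetCard] at hB; exact hB.2
    -- good families
    set good : Finset (Finset (Fin M)) → Prop :=
      fun G => ∀ A ∈ G, ∀ B ∈ G, A ≠ B → (A ∩ B).card ≤ lf with hgood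
    set S : Finset (Finset (Finset (Fin M))) := F.powerset.filter good with hS
    have hSne : S.Nonempty := by
      refine ⟨∅, ?_⟩
      rw [hS, Finset.mem_filter]
      exact ⟨Finset.mem_powerset.mpr (Finset.empty_subset _), by intro A hA; simp at hA⟩
    obtain ⟨G, hGS, hGmax⟩ := S.exists_max_image Finset.card hSne
    rw [hS, Finset.mem_filter, Finset.mem_powerset] at hGS
    obtain ⟨hGF, hGgood⟩ := hGS
    -- covering property
    have hcover : ∀ B ∈ F, ∃ A ∈ G, l ≤ (A ∩ B).card := by
      intro B hBF
      by_cases hBG : B ∈ G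
      · exact ⟨B, hBG, by rw [Finset.inter_self, hmemF B hBF]; exact hlk⟩
      · by_contra hcon
        push_neg at hcon
        have hins : insert B G ∈ S := by
          rw [hS, Finset.mem_filter, Finset.mem_powerset]
          constructor
          · exact Finset.insert_subset hBF hGF
          · intro A hA A' hA' hne
            rcases Finset.mem_insert.mp hA with hAB | hAG'
            · rcases Finset.mem_insert.mp hA' with hAB' | hAG''
              · exact absurd (hAB.trans hAB'.symm) hne
              · have := hcon A' hAG''
                rw [hAB, Finset.inter_comm]
                omega
            · rcases Finset.mem_insert.mp hA' with hAB' | hAG''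
              · have := hcon A hAG'
                rw [hAB']
                omega
              · exact hGgood A hAG' A' hAG'' hne
        have := hGmax _ hins
        rw [Finset.card_insert_of_notMem hBG] at this
        omega
    -- counting bound for each A
    have hcount : ∀ A : Finset (Fin M), A.card = k →
        (F.filter (fun B => l ≤ (A ∩ B).card)).card
          ≤ 2 ^ k * ((k - l + 1) * M.choose (k - l)) := by
      intro A hA
      set T : Finset (Finset (Fin M)) :=
        (Finset.range (k - l + 1)).biUnion
          (fun j => Finset.powersetCard j (Finset.univ : Finset (Fin M))) with hT
      have hinj : (F.filter (fun B => l ≤ (A ∩ B).card)).card ≤ (A.powerset ×ˢ T).card := by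
        apply Finset.card_le_card_of_injOn (fun B => (B ∩ A, B \ A))
        · intro B hB
          rw [Finset.mem_coe, Finset.mem_filter] at hB
          obtain ⟨hBF, hBl⟩ := hB
          have hBcard : B.card = k := hmemF B hBF
          rw [Finset.mem_coe, Finset.mem_product]
          constructor
          · exact Finset.mem_powerset.mpr Finset.inter_subset_right
          · rw [hT, Finset.mem_biUnion]
            refine ⟨(B \ A).card, ?_, ?_⟩
            · rw [Finset.mem_range]
              have hsd := Finset.card_sdiff_add_card_inter B A
              rw [Finset.inter_comm] at hBl
              omega
            · exact Finset.mem_powersetCard.mpr ⟨Finset.subset_univ _, rfl⟩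
        · intro B1 hB1 B2 hB2 heq
          have h1 : B1 ∩ A = B2 ∩ A := congrArg Prod.fst heq
          have h2 : B1 \ A = B2 \ A := congrArg Prod.snd heq
          calc B1 = B1 \ A ∪ B1 ∩ A := (Finset.sdiff_union_inter B1 A).symm
            _ = B2 \ A ∪ B2 ∩ A := by rw [h1, h2]
            _ = B2 := Finset.sdiff_union_inter B2 A
      have hTcard : T.card ≤ (k - l + 1) * M.choose (k - l) := by
        rw [hT]
        refine Finset.card_biUnion_le.trans ?_
        have hbound : ∀ j ∈ Finset.range (k - l + 1),
            (Finset.powersetCard j (Finset.univ : Finset (Fin M))).card ≤ M.choose (k - l) := by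
          intro j hj
          rw [Finset.card_powersetCard, Finset.card_univ, Fintype.card_fin]
          exact ad_choose_mono_below M (k - l) (by omega) j (by
            rw [Finset.mem_range] at hj; omega)
        calc (∑ j ∈ Finset.range (k - l + 1),
              (Finset.powersetCard j (Finset.univ : Finset (Fin M))).card)
            ≤ ∑ _j ∈ Finset.range (k - l + 1), M.choose (k - l) :=
              Finset.sum_le_sum hbound
          _ = (k - l + 1) * M.choose (k - l) := by
              rw [Finset.sum_const, Finset.card_range, smul_eq_mul]
      calc (F.filter (fun B => l ≤ (A ∩ B).card)).card
          ≤ (A.powerset ×ˢ T).card := hinj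
        _ = 2 ^ k * T.card := by rw [Finset.card_product, Finset.card_powerset, hA]
        _ ≤ 2 ^ k * ((k - l + 1) * M.choose (k - l)) := Nat.mul_le_mul_left _ hTcard
    -- global counting
    set N : ℕ := G.card with hN
    have hmain : M.choose k ≤ N * (2 ^ k * ((k - l + 1) * M.choose (k - l))) := by
      have hsub : F ⊆ G.biUnion (fun A => F.filter (fun B => l ≤ (A ∩ B).card)) := by
        intro B hB
        obtain ⟨A, hAG, hAB⟩ := hcover B hB
        exact Finset.mem_biUnion.mpr ⟨A, hAG, Finset.mem_filter.mpr ⟨hB, hAB⟩⟩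
      calc M.choose k = F.card := hFcard.symm
        _ ≤ (G.biUnion (fun A => F.filter (fun B => l ≤ (A ∩ B).card))).card :=
            Finset.card_le_card hsub
        _ ≤ ∑ A ∈ G, (F.filter (fun B => l ≤ (A ∩ B).card)).card :=
            Finset.card_biUnion_le
        _ ≤ ∑ _A ∈ G, 2 ^ k * ((k - l + 1) * M.choose (k - l)) :=
            Finset.sum_le_sum (fun A hA => hcount A (hmemF A (hGF hA)))
        _ = N * (2 ^ k * ((k - l + 1) * M.choose (k - l))) := by
            rw [Finset.sum_const, smul_eq_mul]
    -- cancel the choose factor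
    have hCpos : 0 < M.choose (k - l) := Nat.choose_pos (by omega)
    have hNat : (M - k) ^ l ≤ N * 2 ^ k * (k - l + 1) * k ^ l := by
      have h1 : M.choose (k - l) * (M - k) ^ l ≤ M.choose k * k ^ l :=
        ad_choose_ratio M k hkM l hlk
      have h2 : M.choose k * k ^ l
          ≤ (N * (2 ^ k * ((k - l + 1) * M.choose (k - l)))) * k ^ l :=
        Nat.mul_le_mul_right _ hmain
      have h3 : (N * (2 ^ k * ((k - l + 1) * M.choose (k - l)))) * k ^ l
          = M.choose (k - l) * (N * 2 ^ k * (k - l + 1) * k ^ l) := by ring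
      rw [h3] at h2
      exact Nat.le_of_mul_le_mul_left (le_trans h1 h2) hCpos
    -- real-number finale
    have hMk : (k:ℝ) * (1 / eps - 1) ≤ ((M - k : ℕ) : ℝ) := by
      rw [Nat.cast_sub hkM]
      have hkeps : (k:ℝ) / eps ≤ M := by
        rw [div_le_iff₀ heps0]
        calc (k:ℝ) ≤ eps * M := hkle
          _ = M * eps := by ring
      have : (k:ℝ) * (1 / eps - 1) = k / eps - k := by field_simp
      linarith
    have hpow1 : ((k:ℝ) * (2 ^ ((2:ℝ)/lam))) ^ l ≤ ((M - k : ℕ) : ℝ) ^ l := by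
      apply pow_le_pow_left₀ (by positivity)
      calc (k:ℝ) * (2 ^ ((2:ℝ)/lam)) ≤ k * (1 / eps - 1) := by
            apply mul_le_mul_of_nonneg_left (le_of_lt hX) (le_of_lt hkpos)
        _ ≤ _ := hMk
    have hpow2 : (2:ℝ) ^ ((2:ℝ) * k) ≤ ((2:ℝ) ^ ((2:ℝ)/lam)) ^ l := by
      rw [← Real.rpow_natCast ((2:ℝ) ^ ((2:ℝ)/lam)) l, ← Real.rpow_mul (by norm_num)]
      apply Real.rpow_le_rpow_left_iff one_lt_two |>.mpr
      rw [div_mul_eq_mul_div, le_div_iff₀ hlam]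
      nlinarith
    have hNatR : ((M - k : ℕ) : ℝ) ^ l ≤ (N:ℝ) * 2 ^ k * (k - l + 1 : ℕ) * (k:ℝ) ^ l := by
      exact_mod_cast hNat
    have hfinal : (2:ℝ) ^ k ≤ (N:ℝ) * (k + 1) := by
      have hkl1 : ((k - l + 1 : ℕ) : ℝ) ≤ (k:ℝ) + 1 := by
        have : k - l + 1 ≤ k + 1 := by omega
        exact_mod_cast this
      have hchain : (k:ℝ) ^ l * (2:ℝ) ^ ((2:ℝ) * k)
          ≤ (N:ℝ) * 2 ^ k * ((k:ℝ) + 1) * (k:ℝ) ^ l := by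
        calc (k:ℝ) ^ l * (2:ℝ) ^ ((2:ℝ) * k)
            ≤ (k:ℝ) ^ l * ((2:ℝ) ^ ((2:ℝ)/lam)) ^ l := by
              apply mul_le_mul_of_nonneg_left hpow2 (by positivity)
          _ = ((k:ℝ) * (2 ^ ((2:ℝ)/lam))) ^ l := by rw [mul_pow]
          _ ≤ ((M - k : ℕ) : ℝ) ^ l := hpow1
          _ ≤ (N:ℝ) * 2 ^ k * (k - l + 1 : ℕ) * (k:ℝ) ^ l := hNatR
          _ ≤ (N:ℝ) * 2 ^ k * ((k:ℝ) + 1) * (k:ℝ) ^ l := by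
              have h0 : (0:ℝ) ≤ (N:ℝ) * 2 ^ k := by positivity
              have h1 := mul_le_mul_of_nonneg_left hkl1 h0
              exact mul_le_mul_of_nonneg_right h1 (by positivity)
      have hklpos : (0:ℝ) < (k:ℝ) ^ l := by positivity
      have h22k : (2:ℝ) ^ ((2:ℝ) * k) = (2:ℝ) ^ k * (2:ℝ) ^ k := by
        rw [show (2:ℝ) * k = (k:ℝ) + k by ring, Real.rpow_add (by norm_num),
          Real.rpow_natCast]
      rw [h22k] at hchain
      have h2kpos : (0:ℝ) < (2:ℝ) ^ k := by positivity
      have hc : (2:ℝ) ^ k * ((2:ℝ) ^ k * (k:ℝ) ^ l)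
          ≤ ((N:ℝ) * ((k:ℝ) + 1)) * ((2:ℝ) ^ k * (k:ℝ) ^ l) := by
        have e1 : (2:ℝ) ^ k * ((2:ℝ) ^ k * (k:ℝ) ^ l)
            = (k:ℝ) ^ l * ((2:ℝ) ^ k * (2:ℝ) ^ k) := by ring
        have e2 : ((N:ℝ) * ((k:ℝ) + 1)) * ((2:ℝ) ^ k * (k:ℝ) ^ l)
            = (N:ℝ) * 2 ^ k * ((k:ℝ) + 1) * (k:ℝ) ^ l := by ring
        rw [e1, e2]; exact hchain
      exact le_of_mul_le_mul_right hc (by positivity)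
    obtain ⟨f, hfinj, hfmem⟩ := ad_enum G
    refine ⟨N, f, ?_, ?_, ?_⟩
    · rw [ge_iff_le, div_le_iff₀ (by exact_mod_cast hM)]
      have : (N:ℝ) * (k + 1) ≤ N * M := by
        apply mul_le_mul_of_nonneg_left hkMreal (Nat.cast_nonneg N)
      linarith
    · intro i
      exact hmemF _ (hGF (hfmem i))
    · intro i j hij
      have hne : f i ≠ f j := fun h => hij (hfinj h)
      have hle := hGgood _ (hfmem i) _ (hfmem j) hne
      have h1 : ((f i ∩ f j).card : ℝ) ≤ (lf:ℝ) := by exact_mod_cast hle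
      have h2 : (lf:ℝ) ≤ lam * k := Nat.floor_le (by positivity)
      linarith
end

section
/- Let d be a positive integer, let λ > 0 and ε ∈ (0,1) satisfy λ·log₂(1/ε − 1) > 4, and assume ⌊εd⌋ ≥ 1. Then there exist N unit vectors ψ₁, …, ψ_N in ℂ^d with N ≥ 2^{⌊εd⌋}/d such that for all i ≠ j the squared overlap satisfies |⟨ψ_i, ψ_j⟩|² ≤ λ. -/
open Finset

/-- Greedy construction of an independent set for a reflexive symmetric "bad" relation. -/
lemma greedy_indep {α : Type*} [DecidableEq α] (R : α → α → Prop) [DecidableRel R]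
    (hsym : ∀ a b, R a b → R b a) (V : ℝ) :
    ∀ (A : Finset α), (∀ a ∈ A, ((A.filter (fun b => R a b)).card : ℝ) ≤ V) →
      (∀ a ∈ A, R a a) →
    ∃ S : Finset α, S ⊆ A ∧ (∀ a ∈ S, ∀ b ∈ S, a ≠ b → ¬ R a b) ∧
      (A.card : ℝ) ≤ S.card * V := by
  intro A
  induction A using Finset.strongInduction with
  | _ A ih =>
    intro hV hrefl
    rcases A.eq_empty_or_nonempty with rfl | ⟨a, ha⟩
    · exact ⟨∅, by simp⟩
    · set A' := A.filter (fun b => ¬ R a b) with hA'def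
      have haA' : a ∉ A' := by simp [hA'def, hrefl a ha]
      have hss : A' ⊂ A := by
        refine Finset.ssubset_iff_of_subset (Finset.filter_subset _ _) |>.2 ⟨a, ha, haA'⟩
      obtain ⟨S', hS'A', hind, hcard⟩ := ih A' hss
        (fun b hb => le_trans (by
          exact_mod_cast Finset.card_le_card
            (Finset.filter_subset_filter _ (Finset.filter_subset _ _)))
          (hV b (Finset.mem_of_mem_filter _ hb)))
        (fun b hb => hrefl b (Finset.mem_of_mem_filter _ hb))
      have haS' : a ∉ S' := fun h => haA' (hS'A' h)
      refine ⟨insert a S', ?_, ?_, ?_⟩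
      · exact Finset.insert_subset ha (hS'A'.trans (Finset.filter_subset _ _))
      · intro x hx y hy hxy
        rcases Finset.mem_insert.1 hx with hxa | hx'
        · subst hxa
          rcases Finset.mem_insert.1 hy with hya | hy'
          · exact absurd hya.symm hxy
          · exact (Finset.mem_filter.1 (hS'A' hy')).2
        · rcases Finset.mem_insert.1 hy with hya | hy'
          · subst hya
            exact fun h => (Finset.mem_filter.1 (hS'A' hx')).2 (hsym _ _ h)
          · exact hind x hx' y hy' hxy
      · have hsplit : (A.filter (fun b => R a b)).card + A'.card = A.card :=
          Finset.card_filter_add_card_filter_not _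
        have h1 : ((A.filter (fun b => R a b)).card : ℝ) ≤ V := hV a ha
        have h2 : (1 : ℝ) ≤ V := by
          refine le_trans ?_ h1
          have : a ∈ A.filter (fun b => R a b) := Finset.mem_filter.2 ⟨ha, hrefl a ha⟩
          exact_mod_cast Finset.card_pos.2 ⟨a, this⟩
        rw [Finset.card_insert_of_notMem haS']
        push_cast
        have : (A.card : ℝ) = (A.filter (fun b => R a b)).card + A'.card := by
          exact_mod_cast hsplit.symm
        rw [this]
        nlinarith [hcard]

/-- Generating-function identity for Hamming spheres. -/
lemma sum_pow_hammingDist {d : ℕ} (x : ℝ) (c : Fin d → Bool) :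
    ∑ c' : Fin d → Bool, x ^ (hammingDist c c') = (1 + x) ^ d := by
  have h := Fintype.prod_sum (fun (i : Fin d) (b : Bool) => if c i = b then (1:ℝ) else x)
  have hL : (∏ i : Fin d, ∑ b : Bool, (if c i = b then (1:ℝ) else x)) = (1+x)^d := by
    have : ∀ i : Fin d, (∑ b : Bool, (if c i = b then (1:ℝ) else x)) = 1 + x := by
      intro i; cases hci : c i <;> simp [Fintype.sum_bool, hci] <;> ring
    rw [Finset.prod_congr rfl (fun i _ => this i), Finset.prod_const, Finset.card_univ,
      Fintype.card_fin]
  rw [hL] at h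
  rw [h]
  refine Finset.sum_congr rfl (fun c' _ => ?_)
  rw [hammingDist]
  rw [← Finset.prod_filter_mul_prod_filter_not Finset.univ (fun i => c i = c' i)
    (fun i => if c i = c' i then (1:ℝ) else x)]
  rw [Finset.prod_congr rfl (fun i hi => if_pos (Finset.mem_filter.1 hi).2),
    Finset.prod_congr rfl (fun i hi => if_neg (Finset.mem_filter.1 hi).2),
    Finset.prod_const, Finset.prod_const, one_pow, one_mul]

lemma hammingDist_le {d : ℕ} (c c' : Fin d → Bool) : hammingDist c c' ≤ d := by
  rw [hammingDist]
  calc _ ≤ (Finset.univ : Finset (Fin d)).card :=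
        Finset.card_le_card (Finset.filter_subset _ _)
    _ = d := by rw [Finset.card_univ, Fintype.card_fin]

lemma hammingDist_not {d : ℕ} (c c' : Fin d → Bool) :
    hammingDist c (fun i => !(c' i)) = d - hammingDist c c' := by
  have h1 : (Finset.univ.filter fun i => c i ≠ (!(c' i)))
      = Finset.univ.filter fun i => ¬ (c i ≠ c' i) := by
    apply Finset.filter_congr
    intro i _
    cases c i <;> cases c' i <;> simp
  have h2 := Finset.card_filter_add_card_filter_not
    (s := (Finset.univ : Finset (Fin d))) (p := fun i => c i ≠ c' i)
  rw [Finset.card_univ, Fintype.card_fin] at h2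
  have h3 : hammingDist c c' = (Finset.univ.filter fun i => c i ≠ c' i).card := rfl
  have h4 : hammingDist c (fun i => !(c' i))
      = (Finset.univ.filter fun i => c i ≠ (!(c' i))).card := rfl
  rw [h4, h1]
  omega

lemma sum_pow_hammingDist_compl {d : ℕ} (x : ℝ) (c : Fin d → Bool) :
    ∑ c' : Fin d → Bool, x ^ (d - hammingDist c c') = (1 + x) ^ d := by
  calc ∑ c' : Fin d → Bool, x ^ (d - hammingDist c c')
      = ∑ c' : Fin d → Bool, x ^ (hammingDist c (fun i => !(c' i))) := by
        refine Finset.sum_congr rfl fun c' _ => by rw [hammingDist_not]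
    _ = (1 + x) ^ d := by
        rw [← sum_pow_hammingDist x c]
        apply Finset.sum_nbij' (fun c' => fun i => !(c' i)) (fun c' => fun i => !(c' i))
          <;> intros <;> simp

noncomputable def qfVec (d : ℕ) (c : Fin d → Bool) : EuclideanSpace ℂ (Fin d) :=
  WithLp.toLp 2 (fun k => (if c k then (1:ℂ) else -1) / (Real.sqrt d : ℂ))

lemma qfVec_norm {d : ℕ} (hd : 0 < d) (c : Fin d → Bool) : ‖qfVec d c‖ = 1 := by
  have hd' : (0:ℝ) < d := by exact_mod_cast hd
  rw [EuclideanSpace.norm_eq]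
  have : ∀ k : Fin d, ‖qfVec d c k‖ ^ 2 = 1 / d := by
    intro k
    rw [qfVec, PiLp.toLp_apply]
    rw [norm_div]
    have h1 : ‖(if c k then (1:ℂ) else -1)‖ = 1 := by
      cases c k <;> simp
    rw [h1]
    have h2 : ‖((Real.sqrt d : ℝ) : ℂ)‖ = Real.sqrt d := by
      rw [Complex.norm_real, Real.norm_eq_abs, abs_of_nonneg (Real.sqrt_nonneg _)]
    rw [h2]
    rw [div_pow, one_pow, Real.sq_sqrt hd'.le]
  rw [Finset.sum_congr rfl (fun k _ => this k), Finset.sum_const, Finset.card_univ,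
    Fintype.card_fin, nsmul_eq_mul, mul_one_div, div_self (ne_of_gt hd'), Real.sqrt_one]

lemma qfVec_inner {d : ℕ} (hd : 0 < d) (c c' : Fin d → Bool) :
    (inner ℂ (qfVec d c) (qfVec d c') : ℂ) =
      ((((d : ℝ) - 2 * hammingDist c c') / d : ℝ) : ℂ) := by
  have hd' : (0:ℝ) < d := by exact_mod_cast hd
  rw [PiLp.inner_apply]
  have key : ∀ k : Fin d, (inner ℂ (qfVec d c k) (qfVec d c' k) : ℂ)
      = (if c k = c' k then (1:ℂ) else -1) / (d : ℂ) := by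
    intro k
    rw [RCLike.inner_apply', qfVec, qfVec, PiLp.toLp_apply, PiLp.toLp_apply]
    rw [map_div₀, Complex.conj_ofReal]
    have h1 : (starRingEnd ℂ) (if c k then (1:ℂ) else -1) = (if c k then (1:ℂ) else -1) := by
      cases c k <;> simp
    rw [h1]
    rw [div_mul_div_comm]
    have h2 : ((Real.sqrt d : ℝ) : ℂ) * ((Real.sqrt d : ℝ) : ℂ) = (d : ℂ) := by
      rw [← Complex.ofReal_mul, Real.mul_self_sqrt hd'.le]; norm_cast
    rw [h2]
    congr 1
    cases hck : c k <;> cases hck' : c' k <;> simp [hck, hck']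
  rw [Finset.sum_congr rfl (fun k _ => key k)]
  rw [← Finset.sum_div]
  rw [← Finset.sum_filter_add_sum_filter_not Finset.univ (fun k => c k = c' k)]
  rw [Finset.sum_congr rfl (fun k hk => if_pos (Finset.mem_filter.1 hk).2),
    Finset.sum_congr rfl (fun k hk => if_neg (Finset.mem_filter.1 hk).2),
    Finset.sum_const, Finset.sum_const]
  have hcards : (Finset.univ.filter (fun k => c k = c' k)).card
      = d - hammingDist c c' := by
    have := Finset.card_filter_add_card_filter_not (s := (Finset.univ : Finset (Fin d)))
      (p := fun k => c k = c' k)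
    rw [Finset.card_univ, Fintype.card_fin] at this
    have hle : hammingDist c c' ≤ d := hammingDist_le c c'
    have hdist : hammingDist c c' = (Finset.univ.filter (fun a => ¬ c a = c' a)).card := rfl
    omega
  have hdist : (Finset.univ.filter (fun k => ¬ c k = c' k)).card = hammingDist c c' := rfl
  rw [nsmul_eq_mul, nsmul_eq_mul, hcards, hdist]
  have hle : hammingDist c c' ≤ d := hammingDist_le c c'
  push_cast [Nat.cast_sub hle]
  have hdC : (d : ℂ) ≠ 0 := by exact_mod_cast hd'.ne'
  field_simp
  ring

lemma qf_numeric (d : ℕ) (lam eps : ℝ)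
    (hlam : 0 < lam) (heps0 : 0 < eps) (heps1 : eps < 1)
    (hcond : lam * Real.logb 2 (1 / eps - 1) > 4)
    (hed : 1 ≤ eps * d) :
    (eps * d + 1) * Real.log 2 ≤ lam * d / 2 := by
  have hlog2 : 0 < Real.log 2 := Real.log_pos (by norm_num)
  have he2 : (2:ℝ) ≤ Real.exp 1 := by
    have := Real.add_one_le_exp 1
    linarith
  have he0 : (0:ℝ) < Real.exp 1 := Real.exp_pos 1
  have hie : (0:ℝ) < 1/eps - 1 := by
    have : 1 < 1/eps := by
      rw [lt_div_iff₀ heps0]; linarith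
    linarith
  set L := Real.logb 2 (1 / eps - 1) with hLdef
  have hL : 0 < L := by
    by_contra h
    push_neg at h
    nlinarith
  have hlogy : Real.log (1/eps) ≤ 1 / (eps * Real.exp 1) := by
    have h0 : 0 < (1/eps) / Real.exp 1 := by positivity
    have h := Real.log_le_sub_one_of_pos h0
    rw [Real.log_div (by positivity) (Real.exp_ne_zero 1), Real.log_exp] at h
    have : (1/eps) / Real.exp 1 = 1 / (eps * Real.exp 1) := by field_simp
    linarith [this ▸ h]
  have hεL : eps * L ≤ 1 / (Real.exp 1 * Real.log 2) := by
    have h1 : L ≤ Real.log (1/eps) / Real.log 2 := by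
      rw [hLdef, Real.logb]
      gcongr
      · linarith
    calc eps * L ≤ eps * (Real.log (1/eps) / Real.log 2) := by
          exact mul_le_mul_of_nonneg_left h1 heps0.le
      _ ≤ eps * ((1 / (eps * Real.exp 1)) / Real.log 2) := by gcongr
      _ = 1 / (Real.exp 1 * Real.log 2) := by field_simp
  have h7 : 4 * (Real.exp 1 * Real.log 2) * eps < lam := by
    have h6 : (4 * (Real.exp 1 * Real.log 2) * eps) * L < lam * L := by
      calc (4 * (Real.exp 1 * Real.log 2) * eps) * L
          = 4 * (Real.exp 1 * Real.log 2) * (eps * L) := by ring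
        _ ≤ 4 * (Real.exp 1 * Real.log 2) * (1 / (Real.exp 1 * Real.log 2)) := by
            apply mul_le_mul_of_nonneg_left hεL (by positivity)
        _ = 4 := by field_simp
        _ < lam * L := hcond
    exact lt_of_mul_lt_mul_right h6 hL.le
  have hd0 : (0:ℝ) ≤ d := Nat.cast_nonneg d
  have h8 : 4 * (Real.exp 1 * Real.log 2) * eps * d ≤ lam * d :=
    mul_le_mul_of_nonneg_right h7.le hd0
  nlinarith [mul_le_mul_of_nonneg_left hed hlog2.le,
    mul_le_mul_of_nonneg_right he2 (mul_nonneg hlog2.le (mul_nonneg heps0.le hd0)),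
    mul_pos heps0 (lt_of_lt_of_le one_pos (le_trans (le_refl 1) hed))]

set_option maxHeartbeats 2000000 in
/-- **Quantum fingerprinting.** -/
theorem quantum_fingerprinting
    (d : ℕ) (hd : 0 < d) (lam eps : ℝ)
    (hlam : 0 < lam) (heps0 : 0 < eps) (heps1 : eps < 1)
    (hcond : lam * Real.logb 2 (1 / eps - 1) > 4)
    (hfloor : 1 ≤ ⌊eps * d⌋₊) :
    ∃ (N : ℕ) (ψ : Fin N → EuclideanSpace ℂ (Fin d)),
      (N : ℝ) ≥ 2 ^ ⌊eps * d⌋₊ / d ∧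
      (∀ i, ‖ψ i‖ = 1) ∧
      (∀ i j, i ≠ j → ‖(inner ℂ (ψ i) (ψ j) : ℂ)‖ ^ 2 ≤ lam) := by
  have hd' : (0:ℝ) < d := by exact_mod_cast hd
  by_cases hlam1 : 1 ≤ lam
  · refine ⟨2 ^ ⌊eps * ↑d⌋₊, fun _ => qfVec d (fun _ => true), ?_,
      fun i => qfVec_norm hd _, ?_⟩
    · rw [ge_iff_le]
      calc (2:ℝ)^⌊eps*(d:ℝ)⌋₊ / d ≤ 2^⌊eps*(d:ℝ)⌋₊ :=
            div_le_self (by positivity) (by exact_mod_cast hd)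
        _ = ((2^⌊eps*(d:ℝ)⌋₊ : ℕ) : ℝ) := by push_cast; ring
    · intro i j hij
      rw [qfVec_inner hd, hammingDist_self]
      push_cast
      have hdC : ((d:ℕ) : ℂ) ≠ 0 := by exact_mod_cast hd'.ne'
      rw [mul_zero, sub_zero, div_self hdC, norm_one, one_pow]
      exact hlam1
  · push_neg at hlam1
    classical
    set s := Real.sqrt lam with hsdef
    have hs0 : 0 < s := Real.sqrt_pos.2 hlam
    have hs2 : s ^ 2 = lam := Real.sq_sqrt hlam.le
    have hs1 : s < 1 := by nlinarith
    set R : (Fin d → Bool) → (Fin d → Bool) → Prop :=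
      fun c c' => s * d < |(d:ℝ) - 2 * hammingDist c c'| with hRdef
    have hsym : ∀ a b, R a b → R b a := by
      intro a b h
      show s * (d:ℝ) < |(d:ℝ) - 2 * hammingDist b a|
      rw [hammingDist_comm b a]
      exact h
    have hrefl : ∀ a, R a a := by
      intro a
      show s * (d:ℝ) < |(d:ℝ) - 2 * hammingDist a a|
      rw [hammingDist_self]
      push_cast
      rw [mul_zero, sub_zero, abs_of_pos hd']
      nlinarith
    set x := Real.exp (-(2*s)) with hxdef
    have hx0 : 0 < x := Real.exp_pos _
    have hx1 : x ≤ 1 := by rw [hxdef, Real.exp_le_one_iff]; nlinarith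
    set τ := (d:ℝ) * (1 - s) / 2 with hτdef
    set B := 2 * x ^ (-τ) * (1+x)^d with hBdef
    have hV : ∀ c : Fin d → Bool,
        (((Finset.univ.filter (fun c' => R c c')).card : ℝ)) ≤ B := by
      intro c
      have key : ∀ c' ∈ Finset.univ.filter (fun c'' => R c c''),
          (1:ℝ) ≤ x ^ (-τ) * (x ^ (hammingDist c c') + x ^ (d - hammingDist c c')) := by
        intro c' hc'
        have hRcc : s * d < |(d:ℝ) - 2 * hammingDist c c'| := (Finset.mem_filter.1 hc').2
        have hwd := hammingDist_le c c'
        set w := hammingDist c c' with hw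
        have hxw : (0:ℝ) ≤ x ^ w := by positivity
        have hxdw : (0:ℝ) ≤ x ^ (d - w) := by positivity
        have hxτ : (0:ℝ) < x ^ (-τ) := Real.rpow_pos_of_pos hx0 _
        rcases lt_abs.1 hRcc with h | h
        · have hwτ : (w:ℝ) ≤ τ := by rw [hτdef]; nlinarith
          have hkey : (1:ℝ) ≤ x ^ (-τ) * x ^ w := by
            have h1 : x ^ (-τ) * x ^ w = x ^ (-τ + (w:ℝ)) := by
              rw [← Real.rpow_natCast x w, ← Real.rpow_add hx0]
            rw [h1]
            calc (1:ℝ) = x ^ (0:ℝ) := (Real.rpow_zero x).symm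
              _ ≤ x ^ (-τ + (w:ℝ)) :=
                Real.rpow_le_rpow_of_exponent_ge hx0 hx1 (by linarith)
          nlinarith
        · have hwτ : ((d - w : ℕ):ℝ) ≤ τ := by
            rw [hτdef]
            push_cast [Nat.cast_sub hwd]
            nlinarith
          have hkey : (1:ℝ) ≤ x ^ (-τ) * x ^ (d - w) := by
            have h1 : x ^ (-τ) * x ^ (d-w) = x ^ (-τ + ((d-w:ℕ):ℝ)) := by
              rw [← Real.rpow_natCast x (d-w), ← Real.rpow_add hx0]
            rw [h1]
            calc (1:ℝ) = x ^ (0:ℝ) := (Real.rpow_zero x).symm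
              _ ≤ _ := Real.rpow_le_rpow_of_exponent_ge hx0 hx1 (by linarith)
          nlinarith
      calc ((Finset.univ.filter (fun c' => R c c')).card : ℝ)
          = ∑ _c' ∈ Finset.univ.filter (fun c' => R c c'), (1:ℝ) := by
            rw [Finset.sum_const, nsmul_eq_mul, mul_one]
        _ ≤ ∑ c' ∈ Finset.univ.filter (fun c' => R c c'),
              x ^ (-τ) * (x ^ (hammingDist c c') + x ^ (d - hammingDist c c')) :=
            Finset.sum_le_sum key
        _ ≤ ∑ c' : Fin d → Bool,
              x ^ (-τ) * (x ^ (hammingDist c c') + x ^ (d - hammingDist c c')) := by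
            apply Finset.sum_le_sum_of_subset_of_nonneg (Finset.filter_subset _ _)
            intro i _ _
            positivity
        _ = x ^ (-τ) * ((∑ c' : Fin d → Bool, x ^ hammingDist c c')
              + ∑ c' : Fin d → Bool, x ^ (d - hammingDist c c')) := by
            rw [← Finset.mul_sum, ← Finset.sum_add_distrib]
        _ = B := by
            rw [sum_pow_hammingDist x c, sum_pow_hammingDist_compl x c, hBdef]
            ring
    obtain ⟨S, _hSu, hind, hcard⟩ := greedy_indep R hsym B Finset.univ
      (fun a _ => by simpa using hV a)
      (fun a _ => hrefl a)
    set N := S.card with hNdef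
    have hcardU : (((Finset.univ : Finset (Fin d → Bool))).card : ℝ) = 2 ^ d := by
      rw [Finset.card_univ]
      simp [Fintype.card_fun]
    have hBle : B ≤ 2 * 2^d * Real.exp (-(lam * (d:ℝ))/2) := by
      have hxτ : x ^ (-τ) = Real.exp (2 * s * τ) := by
        rw [hxdef, Real.rpow_def_of_pos (Real.exp_pos _), Real.log_exp]
        congr 1
        ring
      have hkey : 1 + x ≤ 2 * Real.exp (-s + s^2/2) := by
        have hcosh := Real.cosh_le_exp_half_sq s
        rw [Real.cosh_eq] at hcosh
        have h1 : 1 + x = Real.exp (-s) * (Real.exp s + Real.exp (-s)) := by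
          rw [hxdef, mul_add, ← Real.exp_add, ← Real.exp_add]
          have e1 : -s + s = 0 := by ring
          have e2 : -s + -s = -(2*s) := by ring
          rw [e1, e2, Real.exp_zero]
        rw [h1]
        calc Real.exp (-s) * (Real.exp s + Real.exp (-s))
            = Real.exp (-s) * (2 * ((Real.exp s + Real.exp (-s))/2)) := by ring
          _ ≤ Real.exp (-s) * (2 * Real.exp (s^2/2)) := by
              apply mul_le_mul_of_nonneg_left (by linarith) (Real.exp_pos _).le
          _ = 2 * Real.exp (-s + s^2/2) := by rw [Real.exp_add]; ring
      calc B = 2 * x^(-τ) * (1+x)^d := hBdef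
        _ ≤ 2 * x^(-τ) * (2 * Real.exp (-s + s^2/2))^d := by
            apply mul_le_mul_of_nonneg_left (pow_le_pow_left₀ (by positivity) hkey d)
              (by positivity)
        _ = 2 * 2^d * (Real.exp (2*s*τ) * Real.exp ((d:ℝ) * (-s + s^2/2))) := by
            rw [hxτ, mul_pow, ← Real.exp_nat_mul]
            ring
        _ = 2 * 2^d * Real.exp (-(lam*(d:ℝ))/2) := by
            rw [← Real.exp_add,
              show 2*s*τ + (d:ℝ)*(-s+s^2/2) = -(lam*(d:ℝ))/2 from by rw [hτdef, ← hs2]; ring]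
    have hE : (0:ℝ) < Real.exp (-(lam*(d:ℝ))/2) := Real.exp_pos _
    have hNge : Real.exp (lam * (d:ℝ) / 2) / 2 ≤ (N:ℝ) := by
      have h1 : (2:ℝ)^d ≤ (N:ℝ) * (2 * 2^d * Real.exp (-(lam*(d:ℝ))/2)) := by
        calc (2:ℝ)^d = ((Finset.univ : Finset (Fin d → Bool)).card : ℝ) := hcardU.symm
          _ ≤ (N:ℝ) * B := hcard
          _ ≤ (N:ℝ) * (2*2^d*Real.exp (-(lam*(d:ℝ))/2)) :=
              mul_le_mul_of_nonneg_left hBle (Nat.cast_nonneg N)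
      have hEE : Real.exp (-(lam*(d:ℝ))/2) * Real.exp (lam*(d:ℝ)/2) = 1 := by
        rw [← Real.exp_add, show -(lam*(d:ℝ))/2 + lam*(d:ℝ)/2 = 0 from by ring, Real.exp_zero]
      have h1' := mul_le_mul_of_nonneg_right h1 (Real.exp_pos (lam*(d:ℝ)/2)).le
      rw [show (N:ℝ) * (2*2^d*Real.exp (-(lam*(d:ℝ))/2)) * Real.exp (lam*(d:ℝ)/2)
          = (N:ℝ) * (2*2^d) * (Real.exp (-(lam*(d:ℝ))/2) * Real.exp (lam*(d:ℝ)/2)) from by ring,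
        hEE, mul_one] at h1'
      have h2d : (0:ℝ) < (2:ℝ)^d := pow_pos two_pos d
      have h1'' : Real.exp (lam*(d:ℝ)/2) * (2:ℝ)^d ≤ (2*(N:ℝ)) * (2:ℝ)^d := by
        calc Real.exp (lam*(d:ℝ)/2) * (2:ℝ)^d = (2:ℝ)^d * Real.exp (lam*(d:ℝ)/2) := by ring
          _ ≤ (N:ℝ) * (2*2^d) := h1'
          _ = (2*(N:ℝ)) * (2:ℝ)^d := by ring
      have hfinal := le_of_mul_le_mul_right h1'' h2d
      linarith
    have hed : 1 ≤ eps * d := by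
      have h1 : ((1:ℕ):ℝ) ≤ (⌊eps * (d:ℝ)⌋₊ : ℝ) := by exact_mod_cast hfloor
      have h2 := Nat.floor_le (by positivity : (0:ℝ) ≤ eps * (d:ℝ))
      simpa using h1.trans h2
    have hnum := qf_numeric d lam eps hlam heps0 heps1 hcond hed
    have hfin : (2:ℝ)^⌊eps*(d:ℝ)⌋₊ ≤ Real.exp (lam*(d:ℝ)/2)/2 := by
      have h3 : Real.exp ((eps*(d:ℝ)+1) * Real.log 2) ≤ Real.exp (lam*(d:ℝ)/2) :=
        Real.exp_le_exp.2 hnum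
      have h5 : Real.exp ((eps*(d:ℝ)+1)*Real.log 2) = (2:ℝ) ^ ((eps*(d:ℝ)+1) : ℝ) := by
        rw [Real.rpow_def_of_pos (by norm_num : (0:ℝ) < 2)]
        ring_nf
      have h6 : ((⌊eps*(d:ℝ)⌋₊ : ℝ) + 1) ≤ eps*(d:ℝ) + 1 := by
        have := Nat.floor_le (by positivity : (0:ℝ) ≤ eps * (d:ℝ))
        linarith
      have h4 : (2:ℝ) * 2^⌊eps*(d:ℝ)⌋₊ ≤ Real.exp ((eps*(d:ℝ)+1)*Real.log 2) := by
        rw [h5]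
        calc (2:ℝ) * 2^⌊eps*(d:ℝ)⌋₊
            = (2:ℝ) ^ (((⌊eps*(d:ℝ)⌋₊:ℕ):ℝ) + 1) := by
              rw [Real.rpow_add (by norm_num), Real.rpow_one, Real.rpow_natCast]
              ring
          _ ≤ (2:ℝ) ^ ((eps*(d:ℝ)+1):ℝ) :=
              Real.rpow_le_rpow_of_exponent_le (by norm_num) h6
      linarith
    refine ⟨N, fun i => qfVec d (↑(S.equivFin.symm i)), ?_,
      fun i => qfVec_norm hd _, ?_⟩
    · rw [ge_iff_le]
      calc (2:ℝ)^⌊eps*(d:ℝ)⌋₊ / (d:ℝ) ≤ (2:ℝ)^⌊eps*(d:ℝ)⌋₊ :=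
            div_le_self (by positivity) (by exact_mod_cast hd)
        _ ≤ Real.exp (lam*(d:ℝ)/2)/2 := hfin
        _ ≤ (N:ℝ) := hNge
    · intro i j hij
      set a := S.equivFin.symm i with ha
      set b := S.equivFin.symm j with hb
      have hab : (a : Fin d → Bool) ≠ (b : Fin d → Bool) := by
        intro h
        apply hij
        have hab' : a = b := Subtype.ext h
        calc i = S.equivFin a := by rw [ha, Equiv.apply_symm_apply]
          _ = S.equivFin b := by rw [hab']
          _ = j := by rw [hb, Equiv.apply_symm_apply]
      have hnR : ¬ R (a : Fin d → Bool) (b : Fin d → Bool) :=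
        hind _ a.2 _ b.2 hab
      have habs : |(d:ℝ) - 2 * hammingDist (a : Fin d → Bool) (b : Fin d → Bool)| ≤ s * d :=
        not_lt.1 hnR
      rw [qfVec_inner hd]
      rw [Complex.norm_real, Real.norm_eq_abs, abs_div, abs_of_pos hd']
      have h1 : |(d:ℝ) - 2 * hammingDist (a : Fin d → Bool) (b : Fin d → Bool)| / (d:ℝ) ≤ s := by
        rw [div_le_iff₀ hd']
        exact habs
      have h2 : (0:ℝ) ≤ |(d:ℝ) - 2 * hammingDist (a : Fin d → Bool) (b : Fin d → Bool)| / (d:ℝ) :=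
        by positivity
      nlinarith
end

section
/- Let {(ρ_i, D_i) : i = 1,…,N} be an ID code on B(ℂ^d) with error probabilities λ₁ of first kind and λ₂ of second kind, let M ≥ 1 and ε > 0. Then there exist N' ≥ ((1/2)·N^ε)^M functions f₁, …, f_{N'} : {1,…,M} → {1,…,N} such that: (i) for every j, (1/M)·Σ_{k=1}^M Tr(ρ_{f_j(k)} D_{f_j(k)}) ≥ 1 − λ₁; and (ii) for all j ≠ j', both (1/M)·Σ_{k=1}^M Tr(ρ_{f_j(k)} D_{f_{j'}(k)}) ≤ λ₂ + ε and (1/M)·Σ_{k=1}^M Tr(ρ_{f_{j'}(k)} D_{f_j(k)}) ≤ λ₂ + ε. Equivalently, the block-diagonal states σ_{f_j} = (1/M)·⊕_k ρ_{f_j(k)} and block-diagonal effects ⊕_k D_{f_j(k)} form an ID code on B(ℂ^d) ⊗ ℂ^M with error probabilities λ₁ and λ₂ + ε and N' messages. -/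
open Matrix ComplexOrder BigOperators

/-- A density matrix on `ℂ^d`: positive semidefinite with trace 1. -/
def IsDensity {d : ℕ} (ρ : Matrix (Fin d) (Fin d) ℂ) : Prop :=
  ρ.PosSemidef ∧ ρ.trace = 1

/-- An effect on `ℂ^d`: `0 ≤ D ≤ I` in the Loewner order. -/
def IsEffect {d : ℕ} (D : Matrix (Fin d) (Fin d) ℂ) : Prop :=
  D.PosSemidef ∧ (1 - D).PosSemidef

lemma trace_re_nonneg_of_psd {d : ℕ} (A : Matrix (Fin d) (Fin d) ℂ)
    (hA : A.PosSemidef) : 0 ≤ A.trace.re := by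
  rw [Matrix.trace]
  simp only [Complex.re_sum, Matrix.diag]
  apply Finset.sum_nonneg
  intro i _
  have := hA.re_dotProduct_nonneg (Pi.single i 1)
  simpa [dotProduct, Matrix.mulVec, Pi.single_apply, Finset.sum_ite_eq] using this

open scoped MatrixOrder in
lemma trace_mul_re_nonneg {d : ℕ} (A B : Matrix (Fin d) (Fin d) ℂ)
    (hA : A.PosSemidef) (hB : B.PosSemidef) : 0 ≤ ((A * B).trace).re := by
  have hs : CFC.sqrt A * CFC.sqrt A = A := by
    have := CFC.sq_sqrt A hA.nonneg
    rwa [pow_two] at this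
  have h1 : (A * B).trace = (CFC.sqrt A * B * CFC.sqrt A).trace := by
    conv_lhs => rw [← hs]
    rw [mul_assoc, Matrix.trace_mul_comm]
  have hH : (CFC.sqrt A).conjTranspose = CFC.sqrt A := (CFC.sqrt_nonneg A).posSemidef.1
  have hpsd : (CFC.sqrt A * B * CFC.sqrt A).PosSemidef := by
    have := hB.conjTranspose_mul_mul_same (CFC.sqrt A)
    rwa [hH] at this
  rw [h1]
  exact trace_re_nonneg_of_psd _ hpsd

lemma tr_le_one {d : ℕ} (A B : Matrix (Fin d) (Fin d) ℂ)
    (hA : IsDensity A) (hB : IsEffect B) : ((A * B).trace).re ≤ 1 := by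
  have h0 := trace_mul_re_nonneg A (1 - B) hA.1 hB.2
  have : (A * (1 - B)).trace = 1 - (A * B).trace := by
    rw [mul_sub, Matrix.trace_sub, mul_one, hA.2]
  rw [this] at h0
  simp only [Complex.sub_re, Complex.one_re] at h0
  linarith

lemma GV (N M : ℕ) (hN : 2 ≤ N) (hM : 1 ≤ M) (eps : ℝ) (heps : 0 < eps) (heps1 : eps < 1) :
    ∃ s : Finset (Fin M → Fin N),
      ((1/2) * (N:ℝ) ^ eps) ^ M ≤ (s.card : ℝ) ∧
      ∀ f ∈ s, ∀ g ∈ s, f ≠ g →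
        ((Finset.univ.filter (fun k => f k = g k)).card : ℝ) ≤ eps * M := by
  classical
  set agr : (Fin M → Fin N) → (Fin M → Fin N) → ℕ :=
    fun f g => (Finset.univ.filter (fun k => f k = g k)).card with hagr
  have hsym : ∀ f g, agr f g = agr g f := by
    intro f g
    simp only [hagr]
    congr 1
    apply Finset.filter_congr
    intro k _
    exact ⟨fun h => h.symm, fun h => h.symm⟩
  set P : Finset (Fin M → Fin N) → Prop :=
    fun s => ∀ f ∈ s, ∀ g ∈ s, f ≠ g → (agr f g : ℝ) ≤ eps * M with hP
  obtain ⟨s, hsmem, hsmax⟩ := Finset.exists_max_image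
    ((Finset.univ : Finset (Finset (Fin M → Fin N))).filter P) Finset.card
    ⟨∅, by simp [hP]⟩
  have hsP : P s := (Finset.mem_filter.1 hsmem).2
  refine ⟨s, ?_, hsP⟩
  -- covering property
  have hN1 : (1:ℝ) ≤ (N:ℝ) := by exact_mod_cast Nat.one_le_of_lt hN
  have hM1 : (1:ℝ) ≤ (M:ℝ) := by exact_mod_cast hM
  have hcov : ∀ g : Fin M → Fin N, ∃ f ∈ s, eps * M < (agr f g : ℝ) := by
    intro g
    by_contra hc
    push_neg at hc
    have hgs : g ∉ s := by
      intro hg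
      have h1 := hc g hg
      have h2 : (agr g g : ℝ) = M := by simp [hagr]
      rw [h2] at h1
      nlinarith
    have hins : P (insert g s) := by
      intro a ha b hb hab
      rcases Finset.mem_insert.1 ha with rfl | ha' <;>
        rcases Finset.mem_insert.1 hb with rfl | hb'
      · exact absurd rfl hab
      · rw [hsym]; exact hc b hb'
      · exact hc a ha'
      · exact hsP a ha' b hb' hab
    have hle := hsmax _ (Finset.mem_filter.2 ⟨Finset.mem_univ _, hins⟩)
    rw [Finset.card_insert_of_notMem hgs] at hle
    omega
  -- ball bound
  set ball : (Fin M → Fin N) → Finset (Fin M → Fin N) :=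
    fun f => Finset.univ.filter (fun g => eps * M < (agr f g : ℝ)) with hball
  have hballbd : ∀ f : Fin M → Fin N,
      ((ball f).card : ℝ) ≤ 2 ^ M * (N:ℝ) ^ ((1 - eps) * M) := by
    intro f
    set Ts := Finset.univ.powerset.filter (fun T : Finset (Fin M) => eps * M < (T.card : ℝ)) with hTs
    have hsub : ball f ⊆ Ts.biUnion
        (fun T => Finset.univ.filter (fun g : Fin M → Fin N => ∀ k ∈ T, g k = f k)) := by
      intro g hg
      simp only [hball, Finset.mem_filter, Finset.mem_univ, true_and] at hg
      refine Finset.mem_biUnion.2 ⟨Finset.univ.filter (fun k => f k = g k), ?_, ?_⟩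
      · simp only [hTs, Finset.mem_filter, Finset.mem_powerset]
        exact ⟨Finset.filter_subset _ _, hg⟩
      · simp only [Finset.mem_filter, Finset.mem_univ, true_and]
        intro k hk
        exact hk.symm
    have hfib : ∀ T : Finset (Fin M),
        (Finset.univ.filter (fun g : Fin M → Fin N => ∀ k ∈ T, g k = f k)).card
          ≤ N ^ (M - T.card) := by
      intro T
      have hcard : (Finset.univ : Finset ({k : Fin M // k ∉ T} → Fin N)).card = N ^ (M - T.card) := by
        rw [Finset.card_univ, Fintype.card_fun, Fintype.card_fin]
        congr 1
        rw [Fintype.card_subtype_compl]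
        congr 1
        · exact Fintype.card_fin M
        · simp [Fintype.card_subtype]
      rw [← hcard]
      apply Finset.card_le_card_of_injOn (fun g (k : {k : Fin M // k ∉ T}) => g k.1)
        (fun g _ => Finset.mem_univ _)
      intro g hg g' hg' he
      simp only [Finset.coe_filter, Set.mem_setOf_eq] at hg hg'
      funext k
      by_cases hk : k ∈ T
      · rw [hg.2 k hk, hg'.2 k hk]
      · exact congrFun he ⟨k, hk⟩
    calc ((ball f).card : ℝ)
        ≤ ((Ts.biUnion (fun T => Finset.univ.filter
            (fun g : Fin M → Fin N => ∀ k ∈ T, g k = f k))).card : ℝ) := by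
          exact_mod_cast Finset.card_le_card hsub
      _ ≤ ∑ T ∈ Ts, ((Finset.univ.filter
            (fun g : Fin M → Fin N => ∀ k ∈ T, g k = f k)).card : ℝ) := by
          exact_mod_cast Finset.card_biUnion_le
      _ ≤ ∑ T ∈ Ts, (N:ℝ) ^ ((1 - eps) * M) := by
          apply Finset.sum_le_sum
          intro T hT
          have hTc : eps * M < (T.card : ℝ) := (Finset.mem_filter.1 hT).2
          have h1 : ((N ^ (M - T.card) : ℕ) : ℝ) = (N:ℝ) ^ (((M - T.card : ℕ) : ℝ)) := by
            rw [Real.rpow_natCast]; push_cast; ring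
          calc ((Finset.univ.filter
                (fun g : Fin M → Fin N => ∀ k ∈ T, g k = f k)).card : ℝ)
              ≤ ((N ^ (M - T.card) : ℕ) : ℝ) := by exact_mod_cast hfib T
            _ = (N:ℝ) ^ (((M - T.card : ℕ) : ℝ)) := h1
            _ ≤ (N:ℝ) ^ ((1 - eps) * M) := by
                apply Real.rpow_le_rpow_of_exponent_le hN1
                have hTM : T.card ≤ M := by simpa using Finset.card_le_univ T
                rw [Nat.cast_sub hTM]
                nlinarith
      _ ≤ (Finset.univ.powerset : Finset (Finset (Fin M))).card * (N:ℝ) ^ ((1 - eps) * M) := by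
          rw [Finset.sum_const, nsmul_eq_mul]
          apply mul_le_mul_of_nonneg_right
          · exact_mod_cast Finset.card_le_card (Finset.filter_subset _ _)
          · positivity
      _ = 2 ^ M * (N:ℝ) ^ ((1 - eps) * M) := by
          rw [Finset.card_powerset, Finset.card_univ, Fintype.card_fin]
          push_cast; ring
  -- total count
  have hcount : ((N:ℝ)) ^ M ≤ (s.card : ℝ) * (2 ^ M * (N:ℝ) ^ ((1 - eps) * M)) := by
    have hcover : (Finset.univ : Finset (Fin M → Fin N)) ⊆ s.biUnion ball := by
      intro g _
      obtain ⟨f, hf, hfg⟩ := hcov g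
      exact Finset.mem_biUnion.2 ⟨f, hf, by simp [hball, hfg]⟩
    have h1 : (Fintype.card (Fin M → Fin N) : ℝ) ≤ ∑ f ∈ s, ((ball f).card : ℝ) := by
      rw [← Finset.card_univ]
      exact_mod_cast (Finset.card_le_card hcover).trans Finset.card_biUnion_le
    have h2 : ∑ f ∈ s, ((ball f).card : ℝ) ≤ s.card * (2 ^ M * (N:ℝ) ^ ((1 - eps) * M)) := by
      calc ∑ f ∈ s, ((ball f).card : ℝ) ≤ ∑ _f ∈ s, (2 ^ M * (N:ℝ) ^ ((1 - eps) * M)) :=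
            Finset.sum_le_sum (fun f _ => hballbd f)
        _ = s.card • (2 ^ M * (N:ℝ) ^ ((1 - eps) * M)) := Finset.sum_const _
        _ = s.card * (2 ^ M * (N:ℝ) ^ ((1 - eps) * M)) := nsmul_eq_mul _ _
    have h3 : (Fintype.card (Fin M → Fin N) : ℝ) = (N:ℝ) ^ M := by
      rw [Fintype.card_fun, Fintype.card_fin, Fintype.card_fin]; push_cast; ring
    linarith
  -- conclude
  have hNpos : (0:ℝ) < (N:ℝ) := by linarith
  have hBpos : (0:ℝ) < 2 ^ M * (N:ℝ) ^ ((1 - eps) * M) := by positivity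
  rw [← mul_le_mul_iff_of_pos_right hBpos]
  have key : ((1/2) * (N:ℝ) ^ eps) ^ M * (2 ^ M * (N:ℝ) ^ ((1 - eps) * M)) = (N:ℝ) ^ M := by
    rw [mul_pow]
    have h4 : ((N:ℝ) ^ eps) ^ M = (N:ℝ) ^ (eps * M) := by
      rw [← Real.rpow_natCast ((N:ℝ) ^ eps) M, ← Real.rpow_mul (le_of_lt hNpos)]
    have h5 : (N:ℝ) ^ (eps * M) * (N:ℝ) ^ ((1 - eps) * M) = (N:ℝ) ^ (M:ℝ) := by
      rw [← Real.rpow_add hNpos]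
      ring_nf
    have h6 : (N:ℝ) ^ ((M:ℕ):ℝ) = (N:ℝ) ^ M := Real.rpow_natCast _ _
    calc ((1:ℝ)/2) ^ M * ((N:ℝ) ^ eps) ^ M * (2 ^ M * (N:ℝ) ^ ((1 - eps) * M))
        = (((1:ℝ)/2) ^ M * 2 ^ M) * ((N:ℝ) ^ (eps * M) * (N:ℝ) ^ ((1 - eps) * M)) := by
          rw [h4]; ring
      _ = 1 * (N:ℝ) ^ (M:ℝ) := by
          rw [h5, ← mul_pow]
          norm_num
      _ = (N:ℝ) ^ M := by rw [one_mul, ← h6]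
  rw [key]
  exact hcount

/-- **Extension of ID codes by a classical system.**
Given an ID code `{(ρ_i, D_i) : i = 1,…,N}` on `B(ℂ^d)` with error probabilities
`λ₁, λ₂`, `M ≥ 1` and `ε > 0`, there exist `N' ≥ ((1/2) N^ε)^M` functions
`f_j : {1,…,M} → {1,…,N}` whose block-diagonal codewords
`σ_{f_j} = (1/M) ⊕_k ρ_{f_j(k)}` and effects `⊕_k D_{f_j(k)}` form an ID code on
`B(ℂ^d) ⊗ ℂ^M` with error probabilities `λ₁` and `λ₂ + ε`; equivalently stated in
terms of the averaged pairings below. -/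
theorem ID_code_extension
    (d N M : ℕ) (hM : 1 ≤ M) (lam1 lam2 eps : ℝ) (heps : 0 < eps)
    (ρ D : Fin N → Matrix (Fin d) (Fin d) ℂ)
    (hρ : ∀ i, IsDensity (ρ i))
    (hD : ∀ i, IsEffect (D i))
    (h1 : ∀ i, 1 - lam1 ≤ ((ρ i * D i).trace).re)
    (h2 : ∀ i j, i ≠ j → ((ρ i * D j).trace).re ≤ lam2) :
    ∃ (N' : ℕ) (f : Fin N' → (Fin M → Fin N)),
      (N' : ℝ) ≥ ((1 / 2) * (N : ℝ) ^ eps) ^ M ∧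
      (∀ j, 1 - lam1 ≤
        (1 / (M : ℝ)) * ∑ k, ((ρ (f j k) * D (f j k)).trace).re) ∧
      (∀ j j', j ≠ j' →
        (1 / (M : ℝ)) * ∑ k, ((ρ (f j k) * D (f j' k)).trace).re ≤ lam2 + eps ∧
        (1 / (M : ℝ)) * ∑ k, ((ρ (f j' k) * D (f j k)).trace).re ≤ lam2 + eps) := by
  classical
  have tr0 : ∀ i j, 0 ≤ ((ρ i * D j).trace).re :=
    fun i j => trace_mul_re_nonneg _ _ (hρ i).1 (hD j).1
  have tr1 : ∀ i j, ((ρ i * D j).trace).re ≤ 1 :=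
    fun i j => tr_le_one _ _ (hρ i) (hD j)
  have hMpos : (0:ℝ) < (M:ℝ) := by exact_mod_cast hM
  have hcond1 : ∀ f : Fin M → Fin N,
      1 - lam1 ≤ (1/(M:ℝ)) * ∑ k, ((ρ (f k) * D (f k)).trace).re := by
    intro f
    have hS : (M:ℝ) * (1 - lam1) ≤ ∑ k, ((ρ (f k) * D (f k)).trace).re := by
      calc (M:ℝ) * (1 - lam1) = ∑ _k : Fin M, (1 - lam1) := by
            rw [Finset.sum_const, Finset.card_univ, Fintype.card_fin, nsmul_eq_mul]
        _ ≤ _ := Finset.sum_le_sum (fun k _ => h1 (f k))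
    calc 1 - lam1 = (1/(M:ℝ)) * ((M:ℝ) * (1 - lam1)) := by field_simp
      _ ≤ _ := mul_le_mul_of_nonneg_left hS (by positivity)
  have havgle1 : ∀ a b : Fin M → Fin N,
      (1/(M:ℝ)) * ∑ k, ((ρ (a k) * D (b k)).trace).re ≤ 1 := by
    intro a b
    have hS : ∑ k, ((ρ (a k) * D (b k)).trace).re ≤ (M:ℝ) * 1 := by
      calc ∑ k, ((ρ (a k) * D (b k)).trace).re ≤ ∑ _k : Fin M, (1:ℝ) :=
            Finset.sum_le_sum (fun k _ => tr1 (a k) (b k))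
        _ = (M:ℝ) * 1 := by
            rw [Finset.sum_const, Finset.card_univ, Fintype.card_fin, nsmul_eq_mul]
    calc (1/(M:ℝ)) * ∑ k, ((ρ (a k) * D (b k)).trace).re
        ≤ (1/(M:ℝ)) * ((M:ℝ) * 1) := mul_le_mul_of_nonneg_left hS (by positivity)
      _ = 1 := by field_simp
  rcases Nat.eq_zero_or_pos N with rfl | hNpos
  · refine ⟨0, Fin.elim0, ?_, fun j => j.elim0, fun j => j.elim0⟩
    have : ((0:ℕ):ℝ) ^ eps = 0 := by
      rw [Nat.cast_zero]; exact Real.zero_rpow heps.ne'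
    rw [this]
    simp [zero_pow (by omega : M ≠ 0)]
  by_cases hbig : 1 ≤ lam2 + eps
  · -- trivial case: lam2 + eps ≥ 1
    set c : Fin M → Fin N := fun _ => ⟨0, hNpos⟩ with hc
    refine ⟨⌈((1/2) * (N:ℝ) ^ eps) ^ M⌉₊, fun _ => c, ?_, fun _ => hcond1 c, ?_⟩
    · exact Nat.le_ceil _
    · intro j j' _
      exact ⟨le_trans (havgle1 c c) hbig, le_trans (havgle1 c c) hbig⟩
  push_neg at hbig
  by_cases hsmall : (N:ℝ) ^ eps ≤ 2
  · refine ⟨1, fun _ _ => ⟨0, hNpos⟩, ?_, fun _ => hcond1 _, ?_⟩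
    · have h0 : (0:ℝ) ≤ (1/2) * (N:ℝ) ^ eps := by positivity
      have hle : (1/2) * (N:ℝ) ^ eps ≤ 1 := by linarith
      calc ((1/2) * (N:ℝ) ^ eps) ^ M ≤ 1 ^ M := pow_le_pow_left₀ h0 hle M
        _ = ((1:ℕ):ℝ) := by norm_num
    · intro j j' hjj
      exact absurd (Subsingleton.elim j j') hjj
  push_neg at hsmall
  have hN2 : 2 ≤ N := by
    by_contra h
    push_neg at h
    have : N = 1 := by omega
    rw [this] at hsmall
    rw [Nat.cast_one, Real.one_rpow] at hsmall
    linarith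
  have hlam2 : 0 ≤ lam2 := by
    have hne : (⟨0, by omega⟩ : Fin N) ≠ ⟨1, by omega⟩ := by
      intro h
      simpa using congrArg Fin.val h
    exact le_trans (tr0 _ _) (h2 _ _ hne)
  have heps1 : eps < 1 := by linarith
  obtain ⟨s, hscard, hsprop⟩ := GV N M hN2 hM eps heps heps1
  have key : ∀ a b : Fin M → Fin N,
      ((Finset.univ.filter (fun k => a k = b k)).card : ℝ) ≤ eps * M →
      (1/(M:ℝ)) * ∑ k, ((ρ (a k) * D (b k)).trace).re ≤ lam2 + eps := by
    intro a b hab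
    set A := Finset.univ.filter (fun k => a k = b k) with hA
    have hsplit : ∑ k, ((ρ (a k) * D (b k)).trace).re =
        ∑ k ∈ A, ((ρ (a k) * D (b k)).trace).re +
        ∑ k ∈ Finset.univ.filter (fun k => ¬ a k = b k), ((ρ (a k) * D (b k)).trace).re :=
      (Finset.sum_filter_add_sum_filter_not _ _ _).symm
    have hb1 : ∑ k ∈ A, ((ρ (a k) * D (b k)).trace).re ≤ (A.card : ℝ) := by
      calc ∑ k ∈ A, ((ρ (a k) * D (b k)).trace).re ≤ ∑ _k ∈ A, (1:ℝ) :=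
            Finset.sum_le_sum (fun k _ => tr1 _ _)
        _ = (A.card : ℝ) := by rw [Finset.sum_const, nsmul_eq_mul, mul_one]
    have hb2 : ∑ k ∈ Finset.univ.filter (fun k => ¬ a k = b k),
        ((ρ (a k) * D (b k)).trace).re ≤
        ((Finset.univ.filter (fun k => ¬ a k = b k)).card : ℝ) * lam2 := by
      calc ∑ k ∈ Finset.univ.filter (fun k => ¬ a k = b k), ((ρ (a k) * D (b k)).trace).re
          ≤ ∑ _k ∈ Finset.univ.filter (fun k => ¬ a k = b k), lam2 := by
            apply Finset.sum_le_sum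
            intro k hk
            exact h2 _ _ (Finset.mem_filter.1 hk).2
        _ = _ := by rw [Finset.sum_const, nsmul_eq_mul]
    have hcards : A.card + (Finset.univ.filter (fun k => ¬ a k = b k)).card = M := by
      rw [hA, Finset.card_filter_add_card_filter_not, Finset.card_univ, Fintype.card_fin]
    have hcc : ((Finset.univ.filter (fun k => ¬ a k = b k)).card : ℝ) = (M:ℝ) - A.card := by
      have := hcards
      push_cast [← this]
      ring
    have hlam2' : lam2 ≤ 1 := by linarith
    have hS : ∑ k, ((ρ (a k) * D (b k)).trace).re ≤ (M:ℝ) * (lam2 + eps) := by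
      rw [hsplit]
      have hAM : (A.card : ℝ) ≤ (M:ℝ) := by
        have : A.card ≤ M := by omega
        exact_mod_cast this
      nlinarith [mul_nonneg (sub_nonneg.2 hab) (sub_nonneg.2 hlam2'),
        mul_nonneg (le_of_lt hMpos) (le_of_lt heps)]
    calc (1/(M:ℝ)) * ∑ k, ((ρ (a k) * D (b k)).trace).re
        ≤ (1/(M:ℝ)) * ((M:ℝ) * (lam2 + eps)) := mul_le_mul_of_nonneg_left hS (by positivity)
      _ = lam2 + eps := by field_simp
  refine ⟨s.card, fun j => (s.equivFin.symm j).1, hscard, fun _ => hcond1 _, ?_⟩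
  intro j j' hjj
  have hne : ((s.equivFin.symm j).1 : Fin M → Fin N) ≠ (s.equivFin.symm j').1 := by
    intro h
    apply hjj
    have := Subtype.ext h
    exact s.equivFin.symm.injective this
  constructor
  · exact key _ _ (hsprop _ (s.equivFin.symm j).2 _ (s.equivFin.symm j').2 hne)
  · exact key _ _ (hsprop _ (s.equivFin.symm j').2 _ (s.equivFin.symm j).2 hne.symm)
end

section
/- Let N ≥ 2, M ≥ 1 be integers and ε > 0. Then there exist N' functions f₁, …, f_{N'} : {1,…,M} → {1,…,N} with N' ≥ ((1/2)·N^ε)^M such that for all j ≠ j', the number of agreement points satisfies |{k ∈ {1,…,M} : f_j(k) = f_{j'}(k)}| ≤ ε·M. -/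
open BigOperators
open Finset

/-- **Combinatorial core of the code-extension construction.**
For integers `N ≥ 2`, `M ≥ 1` and `ε > 0`, there exist `N' ≥ ((1/2) N^ε)^M`
functions `f_j : {1,…,M} → {1,…,N}` that pairwise agree on at most `εM` points. -/
theorem exists_many_rarely_agreeing_functions
    (N M : ℕ) (hN : 2 ≤ N) (hM : 1 ≤ M) (eps : ℝ) (heps : 0 < eps) :
    ∃ (N' : ℕ) (f : Fin N' → (Fin M → Fin N)),
      (N' : ℝ) ≥ ((1 / 2) * (N : ℝ) ^ eps) ^ M ∧
      (∀ j j', j ≠ j' →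
        (({k : Fin M | f j k = f j' k}.toFinset.card : ℝ)) ≤ eps * M) := by
  classical
  by_cases h1 : 1 ≤ eps
  · refine ⟨⌈((1 / 2) * (N : ℝ) ^ eps) ^ M⌉₊, fun _ _ => ⟨0, by omega⟩, Nat.le_ceil _, ?_⟩
    intro j j' _
    simp only [Set.toFinset_setOf]
    have h2 : (filter (fun k : Fin M => (⟨0, by omega⟩ : Fin N) = ⟨0, by omega⟩) univ).card ≤ M := by
      exact le_of_le_of_eq (Finset.card_filter_le (univ : Finset (Fin M)) _) (by simp)
    calc ((filter _ univ).card : ℝ) ≤ (M:ℝ) := by exact_mod_cast h2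
      _ = 1 * M := by ring
      _ ≤ eps * M := by
          apply mul_le_mul_of_nonneg_right h1 (by positivity)
  · push_neg at h1
    set t : ℕ := ⌊eps * M⌋₊ + 1 with ht
    have hεM0 : (0:ℝ) ≤ eps * M := by positivity
    have hεMt : eps * M < t := by
      have := Nat.lt_floor_add_one (eps * M)
      rw [ht]; push_cast; linarith
    have htM : t ≤ M := by
      have h2 : eps * M < M := by
        have : (1:ℝ) ≤ M := by exact_mod_cast hM
        nlinarith
      have h3 : ⌊eps * M⌋₊ < M := (Nat.floor_lt hεM0).2 h2
      omega
    set F := (Fin M → Fin N) with hF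
    let agree : F → F → ℕ := fun f g => (univ.filter fun k => f k = g k).card
    have agree_comm : ∀ f g, agree f g = agree g f := by
      intro f g
      simp only [agree]
      congr 1
      ext k
      simp [eq_comm]
    have agree_self : ∀ f, agree f f = M := by
      intro f; simp [agree]
    -- counting lemma: ball size
    have ball_bound : ∀ f : F, (univ.filter fun g => t ≤ agree f g).card ≤ 2 ^ M * N ^ (M - t) := by
      intro f
      have hsub : (univ.filter fun g => t ≤ agree f g) ⊆
          (powersetCard t (univ : Finset (Fin M))).biUnion
            (fun s => univ.filter fun g : F => ∀ k ∈ s, g k = f k) := by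
        intro g hg
        simp only [mem_filter, mem_univ, true_and] at hg
        obtain ⟨s, hs, hcard⟩ := Finset.exists_subset_card_eq hg
        simp only [mem_biUnion, mem_powersetCard, mem_filter, mem_univ, true_and]
        refine ⟨s, ⟨subset_univ s, hcard⟩, ?_⟩
        intro k hk
        have := hs hk
        simp only [mem_filter, mem_univ, true_and] at this
        exact this.symm
      have hterm : ∀ s ∈ powersetCard t (univ : Finset (Fin M)),
          (univ.filter fun g : F => ∀ k ∈ s, g k = f k).card ≤ N ^ (M - t) := by
        intro s hs
        simp only [mem_powersetCard] at hs
        have hcompl : Fintype.card ↥(sᶜ : Finset (Fin M)) = M - t := by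
          simp [Finset.card_compl, hs.2]
        have : (univ.filter fun g : F => ∀ k ∈ s, g k = f k).card ≤
            (univ : Finset ((sᶜ : Finset (Fin M)) → Fin N)).card := by
          apply Finset.card_le_card_of_injOn (fun g k => g k.1)
          · intro g _; exact mem_univ _
          · intro g hg g' hg' hgg
            simp only [coe_filter, Set.mem_setOf_eq, mem_univ, true_and] at hg hg'
            funext k
            by_cases hk : k ∈ s
            · rw [hg k hk, hg' k hk]
            · have : k ∈ (sᶜ : Finset (Fin M)) := by simpa using hk
              exact congrFun hgg ⟨k, this⟩
        calc (univ.filter fun g : F => ∀ k ∈ s, g k = f k).card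
            ≤ (univ : Finset ((sᶜ : Finset (Fin M)) → Fin N)).card := this
          _ = N ^ (M - t) := by
              rw [Finset.card_univ, Fintype.card_fun, hcompl, Fintype.card_fin]
      calc (univ.filter fun g => t ≤ agree f g).card
          ≤ ((powersetCard t (univ : Finset (Fin M))).biUnion
              (fun s => univ.filter fun g : F => ∀ k ∈ s, g k = f k)).card :=
            Finset.card_le_card hsub
        _ ≤ ∑ s ∈ powersetCard t (univ : Finset (Fin M)),
              (univ.filter fun g : F => ∀ k ∈ s, g k = f k).card := Finset.card_biUnion_le
        _ ≤ ∑ s ∈ powersetCard t (univ : Finset (Fin M)), N ^ (M - t) :=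
            Finset.sum_le_sum hterm
        _ = (powersetCard t (univ : Finset (Fin M))).card * N ^ (M - t) := by
            rw [Finset.sum_const, smul_eq_mul]
        _ ≤ 2 ^ M * N ^ (M - t) := by
            apply Nat.mul_le_mul_right
            calc (powersetCard t (univ : Finset (Fin M))).card
                ≤ (univ : Finset (Fin M)).powerset.card := by
                  apply Finset.card_le_card
                  intro s hs
                  simp only [mem_powersetCard] at hs
                  simp [hs.1]
              _ = 2 ^ M := by simp
    -- maximal code
    let P : Finset F → Prop := fun C => ∀ f ∈ C, ∀ g ∈ C, f ≠ g → agree f g < t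
    have hPdec : DecidablePred P := fun C => by unfold P; infer_instance
    let Cs : Finset (Finset F) := univ.filter P
    have hEmpty : (∅ : Finset F) ∈ Cs := by simp [Cs, P]
    obtain ⟨C, hCCs, hCmax⟩ := Finset.exists_max_image Cs Finset.card ⟨∅, hEmpty⟩
    have hCP : P C := (mem_filter.1 hCCs).2
    -- covering property
    have hcover : ∀ g : F, ∃ f ∈ C, t ≤ agree f g := by
      intro g
      by_contra hcon
      push_neg at hcon
      have hgC : g ∉ C := by
        intro hg
        have := hcon g hg
        rw [agree_self] at this
        omega
      have hins : P (insert g C) := by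
        intro a ha b hb hab
        rcases Finset.mem_insert.1 ha with ha' | ha'
        · rcases Finset.mem_insert.1 hb with hb' | hb'
          · exact absurd (ha'.trans hb'.symm) hab
          · rw [ha', agree_comm]; exact hcon b hb'
        · rcases Finset.mem_insert.1 hb with hb' | hb'
          · rw [hb']; exact hcon a ha'
          · exact hCP a ha' b hb' hab
      have hmem : insert g C ∈ Cs := mem_filter.2 ⟨mem_univ _, hins⟩
      have := hCmax _ hmem
      rw [Finset.card_insert_of_notMem hgC] at this
      omega
    -- counting
    have hcount : N ^ M ≤ C.card * (2 ^ M * N ^ (M - t)) := by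
      have huniv : (univ : Finset F) ⊆ C.biUnion (fun f => univ.filter fun g => t ≤ agree f g) := by
        intro g _
        obtain ⟨f, hf, hfg⟩ := hcover g
        exact Finset.mem_biUnion.2 ⟨f, hf, by simp [hfg]⟩
      calc N ^ M = (univ : Finset F).card := by
              rw [Finset.card_univ]; simp [hF, Fintype.card_fun]
        _ ≤ (C.biUnion (fun f => univ.filter fun g => t ≤ agree f g)).card :=
            Finset.card_le_card huniv
        _ ≤ ∑ f ∈ C, (univ.filter fun g => t ≤ agree f g).card := Finset.card_biUnion_le
        _ ≤ ∑ f ∈ C, 2 ^ M * N ^ (M - t) := Finset.sum_le_sum (fun f _ => ball_bound f)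
        _ = C.card * (2 ^ M * N ^ (M - t)) := by rw [Finset.sum_const, smul_eq_mul]
    -- real arithmetic
    have hNR : (1:ℝ) ≤ (N:ℝ) := by exact_mod_cast (by omega : 1 ≤ N)
    have hNR0 : (0:ℝ) < (N:ℝ) := by linarith
    have hD0 : (0:ℝ) < 2 ^ M * (N:ℝ) ^ (M - t) := by positivity
    have hrhs : ((1 / 2) * (N : ℝ) ^ eps) ^ M * (2 ^ M * (N:ℝ) ^ (M - t)) ≤ (N:ℝ) ^ M := by
      have e1 : ((1 / 2) * (N : ℝ) ^ eps) ^ M = (1/2:ℝ)^M * ((N:ℝ) ^ eps)^M := by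
        rw [mul_pow]
      have e2 : ((N:ℝ) ^ eps)^M = (N:ℝ) ^ (eps * M) := by
        rw [← Real.rpow_natCast ((N:ℝ)^eps) M, ← Real.rpow_mul (le_of_lt hNR0)]
      have e3 : ((N:ℝ):ℝ) ^ ((M - t : ℕ):ℝ) = (N:ℝ) ^ ((M - t : ℕ)) := Real.rpow_natCast _ _
      have key : (N:ℝ) ^ (eps * M) * (N:ℝ) ^ ((M - t : ℕ)) ≤ (N:ℝ) ^ (M:ℕ) := by
        rw [← e3, ← Real.rpow_add hNR0, ← Real.rpow_natCast (N:ℝ) M]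
        apply Real.rpow_le_rpow_of_exponent_le hNR
        have : ((M - t : ℕ):ℝ) = (M:ℝ) - t := by
          push_cast [Nat.cast_sub htM]; ring
        rw [this]
        have : eps * M ≤ t := le_of_lt hεMt
        linarith
      calc ((1 / 2) * (N : ℝ) ^ eps) ^ M * (2 ^ M * (N:ℝ) ^ (M - t))
          = ((1/2:ℝ)^M * 2^M) * ((N:ℝ) ^ (eps * M) * (N:ℝ) ^ ((M - t : ℕ))) := by
            rw [e1, e2]; ring
        _ = (N:ℝ) ^ (eps * M) * (N:ℝ) ^ ((M - t : ℕ)) := by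
            rw [← mul_pow]; norm_num
        _ ≤ (N:ℝ) ^ (M:ℕ) := key
    have hfinal : ((1 / 2) * (N : ℝ) ^ eps) ^ M ≤ C.card := by
      have hcount' : ((N:ℝ)) ^ M ≤ (C.card : ℝ) * (2 ^ M * (N:ℝ) ^ (M - t)) := by
        exact_mod_cast hcount
      have := hrhs.trans hcount'
      exact le_of_mul_le_mul_right this hD0
    -- assemble
    refine ⟨C.card, fun j => (C.equivFin.symm j : F), hfinal, ?_⟩
    intro j j' hjj
    have hne : ((C.equivFin.symm j : F)) ≠ ((C.equivFin.symm j' : F)) := by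
      intro h
      apply hjj
      have : C.equivFin.symm j = C.equivFin.symm j' := Subtype.ext h
      exact C.equivFin.symm.injective this
    have := hCP _ (C.equivFin.symm j).2 _ (C.equivFin.symm j').2 hne
    simp only [Set.toFinset_setOf]
    have hle : (filter (fun k => (C.equivFin.symm j : F) k = (C.equivFin.symm j' : F) k) univ).card
        ≤ ⌊eps * M⌋₊ := by
      have : agree (C.equivFin.symm j : F) (C.equivFin.symm j' : F) < t := this
      simp only [agree] at this
      omega
    have := (Nat.le_floor_iff hεM0).1 hle
    exact this
end
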